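/- For q > 1 and integers m₁ > m₂ ≥ 1, and for all n ≥ m₂(q−1) + m₁, the ratio c(q, m₂, n)/c(q, m₂, n + m₁ − m₂) is monotone non-increasing in q on the region where n + 1 − m₂(q−1) > 0; specifically, for q < q', c(q', m₂, n)/c(q', m₂, n+m₁−m₂) ≤ c(q, m₂, n)/c(q, m₂, n+m₁−m₂), where c(q,m,n) = ((n+1−m(q−1))²/((n+1)q^{m+2}))·C(n+m,m)·((q−1)/q)ⁿ. -/

import Mathlib

/-- The output-spectrum coefficients of the two-mode squeezer channel. -/
noncomputable def squeezerCoeff (q : ℝ) (m n : ℕ) : ℝ :=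
  (((n : ℝ) + 1 - m * (q - 1))^2 / (((n : ℝ) + 1) * q^(m + 2))) *
    (Nat.choose (n + m) m) * ((q - 1) / q)^n

lemma squeezerCoeff_ratio_eq (q : ℝ) (hq : 1 < q) (m k n : ℕ)
    (hb : ((n : ℝ) + k + 1 - m * (q - 1)) ≠ 0) :
    squeezerCoeff q m n / squeezerCoeff q m (n + k)
      = (((n : ℝ) + 1 - m * (q - 1)) / ((n : ℝ) + k + 1 - m * (q - 1)))^2
        * ((((n : ℝ) + k + 1) / ((n : ℝ) + 1))
          * ((Nat.choose (n + m) m : ℝ) / (Nat.choose (n + k + m) m)))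
        * (q / (q - 1))^k := by
  have hq0 : (0:ℝ) < q := by linarith
  have hq1 : q - 1 ≠ 0 := by linarith
  have hn1 : ((n:ℝ) + 1) ≠ 0 := by positivity
  have hc1 : ((Nat.choose (n + m) m : ℝ)) ≠ 0 := by
    exact_mod_cast Nat.choose_pos (Nat.le_add_left m n) |>.ne'
  have hc2 : ((Nat.choose (n + k + m) m : ℝ)) ≠ 0 := by
    exact_mod_cast Nat.choose_pos (Nat.le_add_left m (n + k)) |>.ne'
  unfold squeezerCoeff
  push_cast
  rw [pow_add]
  rw [div_pow, div_pow, div_pow]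
  field_simp
  rw [div_pow, pow_add, pow_add]
  field_simp

/-- For 1 < q < q', integers m₁ > m₂ ≥ 1, and n ≥ m₂(q−1)+m₁ (on the region where
n + 1 − m₂(q'−1) > 0), the ratio c(q,m₂,n)/c(q,m₂,n+m₁−m₂) is non-increasing in q:
c(q',m₂,n)/c(q',m₂,n+m₁−m₂) ≤ c(q,m₂,n)/c(q,m₂,n+m₁−m₂). -/
theorem squeezerCoeff_ratio_antitone (q q' : ℝ) (hq : 1 < q) (hqq' : q < q')
    (m₁ m₂ : ℕ) (hm₂ : 1 ≤ m₂) (hm : m₂ < m₁) (n : ℕ)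
    (hn : (m₂ : ℝ) * (q - 1) + m₁ ≤ (n : ℝ))
    (hn' : 0 < (n : ℝ) + 1 - m₂ * (q' - 1)) :
    squeezerCoeff q' m₂ n / squeezerCoeff q' m₂ (n + m₁ - m₂)
      ≤ squeezerCoeff q m₂ n / squeezerCoeff q m₂ (n + m₁ - m₂) := by
  obtain ⟨k, hk⟩ : ∃ k, m₁ = m₂ + k := ⟨m₁ - m₂, by omega⟩
  have hnk : n + m₁ - m₂ = n + k := by omega
  rw [hnk]
  set a' := (n : ℝ) + 1 - m₂ * (q' - 1) with ha'
  set a := (n : ℝ) + 1 - m₂ * (q - 1) with ha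
  have haa : a' ≤ a := by
    have : (m₂:ℝ) * (q - 1) ≤ m₂ * (q' - 1) := by
      apply mul_le_mul_of_nonneg_left (by linarith) (by positivity)
    simp only [ha, ha']; linarith
  have ha0 : 0 < a := lt_of_lt_of_le hn' haa
  have hb' : (0:ℝ) < (n : ℝ) + k + 1 - m₂ * (q' - 1) := by
    have : (0:ℝ) ≤ k := Nat.cast_nonneg k
    simp only [ha'] at hn'; linarith
  have hb : (0:ℝ) < (n : ℝ) + k + 1 - m₂ * (q - 1) := by
    have : (0:ℝ) ≤ k := Nat.cast_nonneg k
    simp only [ha] at ha0; linarith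
  rw [squeezerCoeff_ratio_eq q hq m₂ k n hb.ne',
      squeezerCoeff_ratio_eq q' (hq.trans hqq') m₂ k n hb'.ne']
  have hq'1 : (0:ℝ) < q' - 1 := by linarith
  have hq1 : (0:ℝ) < q - 1 := by linarith
  gcongr ?_ ^ 2 * _ * ?_ ^ k
  all_goals first
    | exact div_nonneg hn'.le hb'.le
    | exact div_nonneg (by linarith) hq'1.le
    | (rw [div_le_div_iff₀ hb' hb]
       nlinarith [mul_nonneg (Nat.cast_nonneg k : (0:ℝ) ≤ k) (sub_nonneg.2 haa)])
    | (rw [div_le_div_iff₀ hq'1 hq1]; nlinarith)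
    | exact pow_nonneg (div_nonneg (by linarith) hq'1.le) k
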